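/- There is a constant c > 0 such that for all integers n, M, N ≥ 1 and every f : {0,…,N−1} → ℝ^M with ‖f(j)‖_{L_∞^M} ≤ 1 for all j, the Monte Carlo method satisfies N^{−n} · Σ_{(t_1,…,t_n) ∈ {0,…,N−1}^n} ‖ S_N f − (1/n) Σ_{l=1}^n f(t_l) ‖_{L_∞^M} ≤ c·n^{−1/2}·(log(M+1))^{1/2} (logarithm to base 2). -/

import Mathlib

/-- The `L_∞^M` norm on `ℝ^M`: `‖x‖ = max_i |x i|`. -/
noncomputable def linfNorm (M : ℕ) (x : Fin M → ℝ) : ℝ :=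
  ⨆ i, |x i|

private lemma mc_exp_le_add_exp_sq (x : ℝ) : Real.exp x ≤ x + Real.exp (x ^ 2) := by
  rcases le_or_gt (|x|) 1 with h | h
  · have hb := Real.exp_bound h (by norm_num : 0 < 2)
    have h1 := (abs_le.mp hb).2
    have h2 : (∑ i ∈ Finset.range 2, x ^ i / i.factorial) = 1 + x := by
      simp [Finset.sum_range_succ]
    have h3 : Real.exp x ≤ 1 + x + x ^ 2 := by
      have hax : |x| ^ 2 = x ^ 2 := sq_abs x
      have hfac : ((2 : ℕ).succ : ℝ) / ((2 : ℕ).factorial * 2) ≤ 1 := by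
        norm_num [Nat.factorial]
      nlinarith [sq_nonneg x]
    have h4 : 1 + x ^ 2 ≤ Real.exp (x ^ 2) := by
      linarith [Real.add_one_le_exp (x ^ 2)]
    linarith
  · rcases le_or_gt 0 x with hx | hx
    · have hx1 : 1 < x := by rwa [abs_of_nonneg hx] at h
      have hxx : x ≤ x ^ 2 := by nlinarith
      have := Real.exp_le_exp.mpr hxx
      linarith
    · have hx1 : x < -1 := by rw [abs_of_neg hx] at h; linarith
      have h1 : Real.exp x ≤ 1 := Real.exp_le_one_iff.mpr hx.le
      have h2 : 1 + x ^ 2 ≤ Real.exp (x ^ 2) := by linarith [Real.add_one_le_exp (x ^ 2)]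
      nlinarith

private lemma mc_exp_mean_le (ι : Type*) [Fintype ι] [Nonempty ι] (a : ι → ℝ) :
    Real.exp ((Fintype.card ι : ℝ)⁻¹ * ∑ i, a i) ≤
      (Fintype.card ι : ℝ)⁻¹ * ∑ i, Real.exp (a i) := by
  set K : ℝ := (Fintype.card ι : ℝ) with hK
  have hKpos : 0 < K := by positivity
  set m : ℝ := K⁻¹ * ∑ i, a i with hm
  have hsum : ∑ i, a i = K * m := by rw [hm]; field_simp
  have key : K * Real.exp m ≤ ∑ i, Real.exp (a i) := by
    have h1 : ∑ i, Real.exp m * ((a i - m) + 1) = K * Real.exp m := by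
      have : ∑ i, Real.exp m * ((a i - m) + 1)
          = Real.exp m * ((∑ i, a i) - K * m + K) := by
        rw [← Finset.mul_sum]
        congr 1
        rw [Finset.sum_add_distrib, Finset.sum_sub_distrib, Finset.sum_const,
          Finset.sum_const, Finset.card_univ, nsmul_eq_mul, nsmul_eq_mul, ← hK]
        ring
      rw [this, hsum]; ring
    calc K * Real.exp m = ∑ i, Real.exp m * ((a i - m) + 1) := h1.symm
      _ ≤ ∑ i, Real.exp (a i) := by
          apply Finset.sum_le_sum
          intro i _
          have h2 : Real.exp m * ((a i - m) + 1) ≤ Real.exp m * Real.exp (a i - m) :=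
            mul_le_mul_of_nonneg_left (by linarith [Real.add_one_le_exp (a i - m)])
              (Real.exp_nonneg m)
          rwa [← Real.exp_add, add_sub_cancel] at h2
  calc Real.exp m = K⁻¹ * (K * Real.exp m) := by field_simp
    _ ≤ K⁻¹ * ∑ i, Real.exp (a i) :=
        mul_le_mul_of_nonneg_left key (by positivity)

private lemma mc_mgf_bound {N : ℕ} (h : Fin N → ℝ) (hsum : ∑ j, h j = 0)
    (hb : ∀ j, |h j| ≤ 2) (s : ℝ) :
    ∑ j, Real.exp (s * h j) ≤ (N : ℝ) * Real.exp (4 * s ^ 2) := by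
  calc ∑ j, Real.exp (s * h j) ≤ ∑ j, (s * h j + Real.exp ((s * h j) ^ 2)) :=
        Finset.sum_le_sum fun j _ => mc_exp_le_add_exp_sq (s * h j)
    _ = s * (∑ j, h j) + ∑ j, Real.exp ((s * h j) ^ 2) := by
        rw [Finset.sum_add_distrib, Finset.mul_sum]
    _ ≤ 0 + ∑ j, Real.exp (4 * s ^ 2) := by
        rw [hsum, mul_zero]
        gcongr with j _
        have h1 : (s * h j) ^ 2 = s ^ 2 * (h j) ^ 2 := by ring
        have h2 : (h j) ^ 2 ≤ 4 := by
          have := hb j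
          nlinarith [abs_nonneg (h j), sq_abs (h j)]
        rw [h1]
        nlinarith [sq_nonneg s]
    _ = (N : ℝ) * Real.exp (4 * s ^ 2) := by
        rw [zero_add, Finset.sum_const, Finset.card_univ, Fintype.card_fin, nsmul_eq_mul]

private lemma mc_tuple_sum_exp {n N : ℕ} (h : Fin N → ℝ) (c : ℝ) :
    ∑ t : Fin n → Fin N, Real.exp (c * ∑ l, h (t l))
      = (∑ j, Real.exp (c * h j)) ^ n := by
  have hexp : ∀ t : Fin n → Fin N, Real.exp (c * ∑ l, h (t l))
      = ∏ l, Real.exp (c * h (t l)) := by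
    intro t
    rw [← Real.exp_sum, Finset.mul_sum]
  simp_rw [hexp]
  rw [← Fintype.prod_sum (fun (_ : Fin n) (j : Fin N) => Real.exp (c * h j))]
  rw [Finset.prod_const, Finset.card_univ, Fintype.card_fin]

set_option maxHeartbeats 1000000 in
theorem mc_upper_linf :
    ∃ c : ℝ, 0 < c ∧
      ∀ (n M N : ℕ), 1 ≤ n → 1 ≤ M → 1 ≤ N →
        ∀ f : Fin N → Fin M → ℝ, (∀ j, linfNorm M (f j) ≤ 1) →
          ((N : ℝ) ^ n)⁻¹ *
              ∑ t : Fin n → Fin N,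
                linfNorm M ((N : ℝ)⁻¹ • ∑ j, f j - (n : ℝ)⁻¹ • ∑ l, f (t l))
            ≤ c * (n : ℝ) ^ (-(1 / 2 : ℝ)) * Real.logb 2 (M + 1) ^ (1 / 2 : ℝ) := by
  refine ⟨6, by norm_num, ?_⟩
  intro n M N hn hM hN f hf
  haveI : Nonempty (Fin M) := ⟨⟨0, hM⟩⟩
  haveI : Nonempty (Fin N) := ⟨⟨0, hN⟩⟩
  have hnR : (0 : ℝ) < n := by exact_mod_cast hn
  have hNR : (0 : ℝ) < N := by exact_mod_cast hN
  have hMR : (1 : ℝ) ≤ M := by exact_mod_cast hM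
  -- basic bounds on f
  have hfi : ∀ j i, |f j i| ≤ 1 := by
    intro j i
    have h1 : |f j i| ≤ ⨆ i, |f j i| :=
      le_ciSup (f := fun i => |f j i|) (Set.Finite.bddAbove (Set.finite_range _)) i
    exact h1.trans (hf j)
  set μ : Fin M → ℝ := fun i => (N : ℝ)⁻¹ * ∑ j, f j i with hμdef
  have hμ : ∀ i, |μ i| ≤ 1 := by
    intro i
    have h1 : |∑ j, f j i| ≤ ∑ j, |f j i| := Finset.abs_sum_le_sum_abs _ _
    have h2 : ∑ j, |f j i| ≤ ∑ _j : Fin N, (1 : ℝ) :=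
      Finset.sum_le_sum fun j _ => hfi j i
    have h3 : ∑ _j : Fin N, (1 : ℝ) = N := by simp
    rw [hμdef, abs_mul, abs_inv, Nat.abs_cast]
    rw [inv_mul_le_iff₀ hNR]
    simpa [h3] using h1.trans (h2.trans_eq h3)
  set g : Fin N → Fin M → ℝ := fun j i => f j i - μ i with hgdef
  have hgsum : ∀ i, ∑ j, g j i = 0 := by
    intro i
    rw [hgdef]
    simp only [Finset.sum_sub_distrib, Finset.sum_const, Finset.card_univ,
      Fintype.card_fin, nsmul_eq_mul]
    rw [hμdef]
    field_simp
    ring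
  have hgb : ∀ j i, |g j i| ≤ 2 := by
    intro j i
    calc |g j i| ≤ |f j i| + |μ i| := abs_sub _ _
      _ ≤ 2 := by linarith [hfi j i, hμ i]
  -- error function
  set E : (Fin n → Fin N) → ℝ := fun t =>
    linfNorm M ((N : ℝ)⁻¹ • ∑ j, f j - (n : ℝ)⁻¹ • ∑ l, f (t l)) with hEdef
  set err : (Fin n → Fin N) → Fin M → ℝ := fun t i =>
    ((N : ℝ)⁻¹ • ∑ j, f j - (n : ℝ)⁻¹ • ∑ l, f (t l)) i with herrdef
  have herr : ∀ t i, err t i = (-(n : ℝ)⁻¹) * ∑ l, g (t l) i := by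
    intro t i
    rw [herrdef]
    simp only [Pi.sub_apply, Pi.smul_apply, Finset.sum_apply, smul_eq_mul]
    rw [hgdef]
    simp only [Finset.sum_sub_distrib, Finset.sum_const, Finset.card_univ,
      Fintype.card_fin, nsmul_eq_mul]
    rw [hμdef]
    field_simp
    ring
  -- parameters
  set L : ℝ := Real.log (2 * M) with hLdef
  have hL2 : Real.log 2 ≤ L := by
    apply Real.log_le_log (by norm_num)
    linarith
  have hLpos : 0 < L := lt_of_lt_of_le (Real.log_pos (by norm_num)) hL2
  set lam : ℝ := Real.sqrt (n * L) with hlamdef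
  have hlampos : 0 < lam := Real.sqrt_pos.mpr (by positivity)
  have hlamsq : lam ^ 2 = n * L := Real.sq_sqrt (by positivity)
  -- Step 1: per-coordinate, per-sign exponential moment bound
  have step1 : ∀ (s : ℝ), s ^ 2 = lam ^ 2 → ∀ i : Fin M,
      ∑ t : Fin n → Fin N, Real.exp (s * err t i)
        ≤ (N : ℝ) ^ n * Real.exp (4 * lam ^ 2 / n) := by
    intro s hs i
    have hrw : ∀ t : Fin n → Fin N, s * err t i
        = (s * -(n : ℝ)⁻¹) * ∑ l, g (t l) i := by
      intro t; rw [herr t i]; ring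
    simp_rw [hrw]
    rw [mc_tuple_sum_exp (fun j => g j i) (s * -(n : ℝ)⁻¹)]
    have hbase : ∑ j, Real.exp ((s * -(n : ℝ)⁻¹) * g j i)
        ≤ (N : ℝ) * Real.exp (4 * (s * -(n : ℝ)⁻¹) ^ 2) :=
      mc_mgf_bound (fun j => g j i) (hgsum i) (fun j => hgb j i) _
    have hbase0 : (0 : ℝ) ≤ ∑ j, Real.exp ((s * -(n : ℝ)⁻¹) * g j i) :=
      Finset.sum_nonneg fun j _ => (Real.exp_pos _).le
    calc (∑ j, Real.exp ((s * -(n : ℝ)⁻¹) * g j i)) ^ n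
        ≤ ((N : ℝ) * Real.exp (4 * (s * -(n : ℝ)⁻¹) ^ 2)) ^ n :=
          pow_le_pow_left₀ hbase0 hbase n
      _ = (N : ℝ) ^ n * Real.exp (4 * lam ^ 2 / n) := by
          rw [mul_pow, ← Real.exp_nat_mul]
          congr 2
          have : (s * -(n : ℝ)⁻¹) ^ 2 = lam ^ 2 * ((n : ℝ)⁻¹) ^ 2 := by
            rw [← hs]; ring
          rw [this]
          field_simp
  -- Step 2: bound on the sum of exp(lam * E t)
  have step2 : ∑ t : Fin n → Fin N, Real.exp (lam * E t)
      ≤ 2 * M * ((N : ℝ) ^ n * Real.exp (4 * lam ^ 2 / n)) := by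
    have hptwise : ∀ t, Real.exp (lam * E t)
        ≤ ∑ i, (Real.exp (lam * err t i) + Real.exp (-lam * err t i)) := by
      intro t
      obtain ⟨i0, hi0⟩ := exists_eq_ciSup_of_finite (f := fun i => |err t i|)
      have hE : E t = |err t i0| := hi0.symm
      have h1 : Real.exp (lam * E t)
          ≤ Real.exp (lam * err t i0) + Real.exp (-lam * err t i0) := by
        rcases abs_cases (err t i0) with ⟨ha, _⟩ | ⟨ha, _⟩
        · rw [hE, ha]
          linarith [(Real.exp_pos (-lam * err t i0)).le]
        · rw [hE, ha]
          have : lam * -err t i0 = -lam * err t i0 := by ring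
          rw [this]
          linarith [(Real.exp_pos (lam * err t i0)).le]
      refine h1.trans ?_
      exact Finset.single_le_sum
        (f := fun i => Real.exp (lam * err t i) + Real.exp (-lam * err t i))
        (fun i _ => by positivity) (Finset.mem_univ i0)
    calc ∑ t : Fin n → Fin N, Real.exp (lam * E t)
        ≤ ∑ t : Fin n → Fin N, ∑ i,
            (Real.exp (lam * err t i) + Real.exp (-lam * err t i)) :=
          Finset.sum_le_sum fun t _ => hptwise t
      _ = ∑ i, ∑ t : Fin n → Fin N,
            (Real.exp (lam * err t i) + Real.exp (-lam * err t i)) :=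
          Finset.sum_comm
      _ = ∑ i, ((∑ t : Fin n → Fin N, Real.exp (lam * err t i))
            + ∑ t : Fin n → Fin N, Real.exp (-lam * err t i)) := by
          simp [Finset.sum_add_distrib]
      _ ≤ ∑ _i : Fin M, ((N : ℝ) ^ n * Real.exp (4 * lam ^ 2 / n)
            + (N : ℝ) ^ n * Real.exp (4 * lam ^ 2 / n)) := by
          apply Finset.sum_le_sum
          intro i _
          have hA := step1 lam rfl i
          have hB := step1 (-lam) (by ring) i
          exact add_le_add hA hB
      _ = 2 * M * ((N : ℝ) ^ n * Real.exp (4 * lam ^ 2 / n)) := by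
          rw [Finset.sum_const, Finset.card_univ, Fintype.card_fin, nsmul_eq_mul]
          ring
  -- Step 3: Jensen
  set A : ℝ := ((N : ℝ) ^ n)⁻¹ * ∑ t : Fin n → Fin N, E t with hAdef
  have hcard : ((Fintype.card (Fin n → Fin N) : ℕ) : ℝ) = (N : ℝ) ^ n := by
    rw [Fintype.card_fun, Fintype.card_fin, Fintype.card_fin]
    push_cast
    ring
  have step3 : Real.exp (lam * A) ≤ 2 * M * Real.exp (4 * lam ^ 2 / n) := by
    have hj := mc_exp_mean_le (Fin n → Fin N) (fun t => lam * E t)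
    rw [hcard] at hj
    have h1 : ((N : ℝ) ^ n)⁻¹ * ∑ t : Fin n → Fin N, lam * E t = lam * A := by
      rw [hAdef, ← Finset.mul_sum]
      ring
    rw [h1] at hj
    refine hj.trans ?_
    calc ((N : ℝ) ^ n)⁻¹ * ∑ t : Fin n → Fin N, Real.exp (lam * E t)
        ≤ ((N : ℝ) ^ n)⁻¹ * (2 * M * ((N : ℝ) ^ n * Real.exp (4 * lam ^ 2 / n))) :=
          mul_le_mul_of_nonneg_left step2 (by positivity)
      _ = 2 * M * Real.exp (4 * lam ^ 2 / n) := by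
          field_simp
  -- Step 4: take logs
  have step4 : A ≤ 5 * L / lam := by
    have h1 : lam * A ≤ Real.log (2 * M * Real.exp (4 * lam ^ 2 / n)) :=
      (Real.le_log_iff_exp_le (by positivity)).mpr step3
    have h2 : Real.log (2 * M * Real.exp (4 * lam ^ 2 / n))
        = L + 4 * lam ^ 2 / n := by
      rw [Real.log_mul (by positivity) (Real.exp_ne_zero _), Real.log_exp, hLdef]
    have h3 : L + 4 * lam ^ 2 / n = 5 * L := by
      rw [hlamsq]
      field_simp
      ring
    have h4 : lam * A ≤ 5 * L := by rw [h2, h3] at h1; exact h1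
    rw [le_div_iff₀ hlampos]
    linarith [h4]
  -- Step 5: numeric comparison with the RHS
  have hrhs : 5 * L / lam ≤ 6 * (n : ℝ) ^ (-(1 / 2 : ℝ)) * Real.logb 2 (M + 1) ^ (1 / 2 : ℝ) := by
    have hlogb0 : (0 : ℝ) ≤ Real.logb 2 (M + 1) :=
      Real.logb_nonneg (by norm_num) (by linarith)
    have hlam_eq : lam = Real.sqrt n * Real.sqrt L := by
      rw [hlamdef, Real.sqrt_mul (by positivity)]
    have hnrpow : (n : ℝ) ^ (-(1 / 2 : ℝ)) = (Real.sqrt n)⁻¹ := by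
      rw [Real.rpow_neg (by positivity), Real.sqrt_eq_rpow]
    have hlogbrpow : Real.logb 2 (M + 1) ^ (1 / 2 : ℝ) = Real.sqrt (Real.logb 2 (M + 1)) := by
      rw [Real.sqrt_eq_rpow]
    have hLs : Real.sqrt L * Real.sqrt L = L := Real.mul_self_sqrt hLpos.le
    have hLdiv : 5 * L / lam = 5 * Real.sqrt L / Real.sqrt n := by
      rw [hlam_eq, show (5 : ℝ) * L / (Real.sqrt n * Real.sqrt L)
        = 5 * (L / Real.sqrt L) / Real.sqrt n from by ring, Real.div_sqrt]
    have hkey : 5 * Real.sqrt L ≤ 6 * Real.sqrt (Real.logb 2 (M + 1)) := by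
      have h25 : 25 * L ≤ 36 * Real.logb 2 (M + 1) := by
        have hlog2M : L ≤ 2 * Real.log (M + 1) := by
          rw [hLdef]
          have h2M : (2 : ℝ) * M ≤ (M + 1) ^ 2 := by nlinarith
          calc Real.log (2 * M) ≤ Real.log ((M + 1) ^ 2) :=
                Real.log_le_log (by positivity) h2M
            _ = 2 * Real.log (M + 1) := by
                rw [Real.log_pow]; push_cast; ring
        have hlogb_eq : Real.logb 2 (M + 1) = Real.log (M + 1) / Real.log 2 := rfl
        have hlog2pos : 0 < Real.log 2 := Real.log_pos (by norm_num)
        have hlog2lt : Real.log 2 < 0.6931471808 := Real.log_two_lt_d9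
        have hlogM1 : 0 ≤ Real.log (M + 1) := Real.log_nonneg (by linarith)
        calc 25 * L ≤ 50 * Real.log (M + 1) := by linarith
          _ ≤ 36 * Real.logb 2 (M + 1) := by
              rw [hlogb_eq, ← mul_div_assoc, le_div_iff₀ hlog2pos]
              nlinarith
      calc 5 * Real.sqrt L = Real.sqrt (25 * L) := by
            rw [Real.sqrt_mul (by norm_num), show (25 : ℝ) = 5 ^ 2 by norm_num,
              Real.sqrt_sq (by norm_num)]
        _ ≤ Real.sqrt (36 * Real.logb 2 (M + 1)) := Real.sqrt_le_sqrt h25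
        _ = 6 * Real.sqrt (Real.logb 2 (M + 1)) := by
            rw [Real.sqrt_mul (by norm_num), show (36 : ℝ) = 6 ^ 2 by norm_num,
              Real.sqrt_sq (by norm_num)]
    rw [hLdiv, hnrpow, hlogbrpow]
    rw [div_le_iff₀ (by positivity)]
    calc 5 * Real.sqrt L ≤ 6 * Real.sqrt (Real.logb 2 (M + 1)) := hkey
      _ = 6 * (Real.sqrt n)⁻¹ * Real.sqrt (Real.logb 2 (M + 1)) * Real.sqrt n := by
          field_simp
  exact step4.trans hrhs
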